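/- Under the k-step Lanczos bidiagonalization relations, the off-diagonal coefficient satisfies α_{k+1} ≤ γ_k, where γ_k = ‖A − P_{k+1} B_k Q_kᵀ‖ in the spectral norm. -/

import Mathlib

open Matrix

/-- Spectral (operator 2-) norm of a real matrix. -/
noncomputable def specNorm {m n : ℕ} (M : Matrix (Fin m) (Fin n) ℝ) : ℝ :=
  ‖LinearMap.toContinuousLinearMap (Matrix.toEuclideanLin M)‖

/-- under the k-step Lanczos bidiagonalization relations
`A Q_k = P_{k+1} B_k` and `Aᵀ P_{k+1} = Q_k B_kᵀ + α_{k+1} q_{k+1} e_{k+1}ᵀ`,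
the coefficient satisfies `α_{k+1} ≤ γ_k := ‖A − P_{k+1} B_k Q_kᵀ‖` (spectral norm). -/
theorem lanczos_alpha_le_gamma (m n k : ℕ)
    (A : Matrix (Fin m) (Fin n) ℝ)
    (Q : Matrix (Fin n) (Fin k) ℝ) (hQ : Q.transpose * Q = 1)
    (P : Matrix (Fin m) (Fin (k + 1)) ℝ) (hP : P.transpose * P = 1)
    (B : Matrix (Fin (k + 1)) (Fin k) ℝ)
    (q : Fin n → ℝ) (hq : ∑ i, q i ^ 2 = 1) (hqQ : Q.transpose *ᵥ q = 0)
    (α : ℝ) (hα : 0 ≤ α)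
    (hAQ : A * Q = P * B)
    (hATP : A.transpose * P = Q * B.transpose +
      Matrix.of fun (i : Fin n) (j : Fin (k + 1)) =>
        α * q i * (if j = Fin.last k then (1 : ℝ) else 0)) :
    α ≤ specNorm (A - P * B * Q.transpose) := by
  have swap : ∀ {a b : ℕ} (N : Matrix (Fin a) (Fin b) ℝ) (x : Fin b → ℝ) (y : Fin a → ℝ),
      (N *ᵥ x) ⬝ᵥ y = x ⬝ᵥ (N.transpose *ᵥ y) := by
    intro a b N x y
    rw [dotProduct_comm, Matrix.dotProduct_mulVec, dotProduct_comm, Matrix.mulVec_transpose]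
  set M := A - P * B * Q.transpose with hM
  set e : Fin (k + 1) → ℝ := fun j => if j = Fin.last k then (1 : ℝ) else 0 with he
  set u : Fin m → ℝ := P *ᵥ e with hu
  have hMq : M *ᵥ q = A *ᵥ q := by
    rw [hM, sub_mulVec]
    have : (P * B * Q.transpose) *ᵥ q = 0 := by
      rw [Matrix.mul_assoc, ← Matrix.mulVec_mulVec, ← Matrix.mulVec_mulVec, hqQ,
        Matrix.mulVec_zero, Matrix.mulVec_zero]
    rw [this, sub_zero]
  have hkey : u ⬝ᵥ (M *ᵥ q) = α := by
    rw [hMq]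
    have h1 : u ⬝ᵥ (A *ᵥ q) = (A.transpose *ᵥ u) ⬝ᵥ q := by
      rw [Matrix.mulVec_transpose, ← Matrix.dotProduct_mulVec]
    rw [h1, hu, Matrix.mulVec_mulVec, hATP, Matrix.add_mulVec, add_dotProduct]
    have h2 : ((Q * B.transpose) *ᵥ e) ⬝ᵥ q = 0 := by
      rw [← Matrix.mulVec_mulVec, swap, swap, hqQ, Matrix.mulVec_zero, dotProduct_zero]
    have h3 : ((Matrix.of fun (i : Fin n) (j : Fin (k + 1)) =>
        α * q i * (if j = Fin.last k then (1 : ℝ) else 0)) *ᵥ e) = fun i => α * q i := by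
      funext i
      simp [Matrix.mulVec, dotProduct, he, ite_and]
    rw [h2, h3, zero_add]
    simp only [dotProduct]
    have : ∀ i, α * q i * q i = α * q i ^ 2 := by intro i; ring
    simp_rw [this, ← Finset.mul_sum, hq, mul_one]
  have hun : u ⬝ᵥ u = 1 := by
    rw [hu, swap, Matrix.mulVec_mulVec, hP, Matrix.one_mulVec]
    simp [he, dotProduct]
  -- move to EuclideanSpace
  set q' : EuclideanSpace ℝ (Fin n) := (WithLp.equiv 2 (Fin n → ℝ)).symm q with hq'
  set u' : EuclideanSpace ℝ (Fin m) := (WithLp.equiv 2 (Fin m → ℝ)).symm u with hu'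
  have hqnorm : ‖q'‖ = 1 := by
    rw [EuclideanSpace.norm_eq]
    simp only [hq', WithLp.equiv_symm_apply, WithLp.ofLp_toLp, Real.norm_eq_abs, sq_abs]
    rw [hq, Real.sqrt_one]
  have hunorm : ‖u'‖ = 1 := by
    rw [EuclideanSpace.norm_eq]
    have : ∑ i, ‖u' i‖ ^ 2 = u ⬝ᵥ u := by
      simp [hu', dotProduct, sq]
    rw [this, hun, Real.sqrt_one]
  have hinner : (inner ℝ u' (Matrix.toEuclideanLin M q') : ℝ) = α := by
    rw [← hkey, PiLp.inner_apply]
    simp only [Matrix.toEuclideanLin_apply, RCLike.inner_apply, starRingEnd_apply, star_trivial]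
    simp [hu', hq', dotProduct, mul_comm]
  calc α = inner ℝ u' (Matrix.toEuclideanLin M q') := hinner.symm
    _ ≤ ‖u'‖ * ‖Matrix.toEuclideanLin M q'‖ := real_inner_le_norm _ _
    _ = ‖(LinearMap.toContinuousLinearMap (Matrix.toEuclideanLin M)) q'‖ := by
        rw [hunorm, one_mul]; rfl
    _ ≤ ‖LinearMap.toContinuousLinearMap (Matrix.toEuclideanLin M)‖ * ‖q'‖ :=
        ContinuousLinearMap.le_opNorm _ _
    _ = specNorm M := by rw [hqnorm, mul_one, specNorm]
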